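/- Let (M, δ) be a matrix algebra with delta-form, H a Hilbert-M-bimodule, and φ_L: L²(M) ⊗ H → H the bounded extension of ⟦x⟧ ⊗ ξ ↦ x·ξ. Then the adjoint is φ_L*(ξ) = Σ_{x ∈ B} ⟦x⟧ ⊗ x*·ξ for any orthonormal basis B of L²(M), and φ_L ∘ φ_L* = id_H. -/

import Mathlib

open scoped ComplexOrder TensorProduct

local notation "⟪" x ", " y "⟫" => @inner ℂ _ _ x y

/-- For a Hilbert-`M`-bimodule `H` over the matrix algebra `M = ℂ^{d×d}` with
delta-form `δ(x) = d·tr(xσ)`, the map `φ_L : L²(M) ⊗ H → H`, `⟦x⟧ ⊗ ξ ↦ x·ξ`, has adjoint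
`φ_L*(ξ) = ∑_{x ∈ B} ⟦x⟧ ⊗ x*·ξ` for any orthonormal basis `B` of `L²(M)`, and
`φ_L ∘ φ_L* = id_H`. -/
theorem stmt7 (d : ℕ) (hd : 0 < d)
    (σ : Matrix (Fin d) (Fin d) ℂ) (hσ : σ.PosDef)
    (htr : (σ⁻¹).trace = (d : ℂ))
    {H : Type*} [NormedAddCommGroup H] [InnerProductSpace ℂ H]
    (lH : Matrix (Fin d) (Fin d) ℂ →ₐ[ℂ] Module.End ℂ H)
    (rH : (Matrix (Fin d) (Fin d) ℂ)ᵐᵒᵖ →ₐ[ℂ] Module.End ℂ H)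
    (hcomm : ∀ x y, lH x * rH (MulOpposite.op y) = rH (MulOpposite.op y) * lH x)
    (hlstar : ∀ x (ξ η : H), ⟪lH x ξ, η⟫ = ⟪ξ, lH (star x) η⟫)
    (hrstar : ∀ y (ξ η : H), ⟪rH (MulOpposite.op y) ξ, η⟫ =
      ⟪ξ, rH (MulOpposite.op (star y)) η⟫)
    -- an orthonormal basis of L²(M)
    {ι : Type*} [Fintype ι] [DecidableEq ι] (b : ι → Matrix (Fin d) (Fin d) ℂ)
    (honb : ∀ i j, (d : ℂ) * ((star (b j)) * (b i) * σ).trace = if i = j then 1 else 0)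
    (hspan : Submodule.span ℂ (Set.range b) = ⊤)
    -- the tensor product inner product on L²(M) ⊗ H, linear in the first variable
    (ipT : (Matrix (Fin d) (Fin d) ℂ ⊗[ℂ] H) →
      (Matrix (Fin d) (Fin d) ℂ ⊗[ℂ] H) → ℂ)
    (hipT₁ : ∀ u v w, ipT (u + v) w = ipT u w + ipT v w)
    (hipT₂ : ∀ u v w, ipT u (v + w) = ipT u v + ipT u w)
    (hipTt : ∀ (x y : Matrix (Fin d) (Fin d) ℂ) (ξ η : H),
      ipT (x ⊗ₜ[ℂ] ξ) (y ⊗ₜ[ℂ] η) = ((d : ℂ) * ((star y) * x * σ).trace) * ⟪η, ξ⟫)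
    -- φ_L and its adjoint φ_L*
    (φL : Matrix (Fin d) (Fin d) ℂ ⊗[ℂ] H →ₗ[ℂ] H)
    (hφL : ∀ (x : Matrix (Fin d) (Fin d) ℂ) (ξ : H), φL (x ⊗ₜ[ℂ] ξ) = lH x ξ)
    (φLstar : H →ₗ[ℂ] Matrix (Fin d) (Fin d) ℂ ⊗[ℂ] H)
    (hadj : ∀ ξ u, ipT (φLstar ξ) u = ⟪φL u, ξ⟫) :
    (∀ ξ, φLstar ξ = ∑ i, (b i) ⊗ₜ[ℂ] (lH (star (b i)) ξ)) ∧
      (∀ ξ, φL (φLstar ξ) = ξ) := by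
  classical
  have hd' : (d : ℂ) ≠ 0 := Nat.cast_ne_zero.mpr hd.ne'
  -- the delta-form linear functionals
  let φf : ι → (Matrix (Fin d) (Fin d) ℂ →ₗ[ℂ] ℂ) := fun i =>
    { toFun := fun x => (d : ℂ) * ((star (b i)) * x * σ).trace
      map_add' := by
        intro x y
        simp [Matrix.mul_add, Matrix.add_mul, mul_add]
      map_smul' := by
        intro r x
        simp [Matrix.mul_smul, Matrix.smul_mul]
        ring }
  have hφfb : ∀ i j, φf j (b i) = if i = j then 1 else 0 := fun i j => honb i j
  -- linear independence
  have hli : LinearIndependent ℂ b := by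
    rw [Fintype.linearIndependent_iff]
    intro g hg j
    have h := congrArg (φf j) hg
    simpa [map_sum, map_smul, smul_eq_mul, hφfb, mul_ite, mul_one, mul_zero,
      Finset.sum_ite_eq'] using h
  let B : Module.Basis ι ℂ (Matrix (Fin d) (Fin d) ℂ) := Module.Basis.mk hli (le_of_eq hspan.symm)
  have hB : ∀ i, B i = b i := fun i => Module.Basis.mk_apply hli _ i
  have hsumrepr : ∀ x : Matrix (Fin d) (Fin d) ℂ, ∑ i, B.repr x i • b i = x := by
    intro x
    have := B.sum_repr x
    simpa [hB] using this
  -- the coefficient functional is the basis coordinate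
  have hrepr : ∀ (x : Matrix (Fin d) (Fin d) ℂ) (j : ι),
      (d : ℂ) * ((star (b j)) * x * σ).trace = B.repr x j := by
    intro x j
    have h := congrArg (φf j) (hsumrepr x)
    show φf j x = B.repr x j
    simpa [map_sum, map_smul, smul_eq_mul, hφfb, mul_ite, mul_one, mul_zero,
      Finset.sum_ite_eq'] using h.symm
  -- coordinate maps on the tensor product
  let c : ι → (Matrix (Fin d) (Fin d) ℂ ⊗[ℂ] H →ₗ[ℂ] H) := fun j =>
    TensorProduct.lift ((LinearMap.lsmul ℂ H) ∘ₗ (B.coord j))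
  have hc : ∀ (j : ι) (x : Matrix (Fin d) (Fin d) ℂ) (ξ : H),
      c j (x ⊗ₜ[ℂ] ξ) = B.repr x j • ξ := fun j x ξ => rfl
  -- reconstruction of a tensor from coordinates
  have hrecon : ∀ u : Matrix (Fin d) (Fin d) ℂ ⊗[ℂ] H,
      ∑ i, (b i) ⊗ₜ[ℂ] (c i u) = u := by
    intro u
    induction u using TensorProduct.induction_on with
    | zero => simp
    | tmul x ξ =>
        calc ∑ i, (b i) ⊗ₜ[ℂ] (c i (x ⊗ₜ[ℂ] ξ))
            = ∑ i, (B.repr x i • b i) ⊗ₜ[ℂ] ξ := by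
              simp [hc, TensorProduct.smul_tmul]
          _ = (∑ i, B.repr x i • b i) ⊗ₜ[ℂ] ξ := by
              rw [TensorProduct.sum_tmul]
          _ = x ⊗ₜ[ℂ] ξ := by rw [hsumrepr]
    | add u v hu hv =>
        simp only [map_add, TensorProduct.tmul_add, Finset.sum_add_distrib, hu, hv]
  -- ipT with a basis tensor computes a coordinate
  have hipT0 : ∀ w, ipT 0 w = 0 := by
    intro w
    have h := hipT₁ 0 0 w
    rw [add_zero] at h
    exact left_eq_add.mp h
  have hip : ∀ (u : Matrix (Fin d) (Fin d) ℂ ⊗[ℂ] H) (j : ι) (η : H),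
      ipT u ((b j) ⊗ₜ[ℂ] η) = ⟪η, c j u⟫ := by
    intro u j η
    induction u using TensorProduct.induction_on with
    | zero => simp [hipT0]
    | tmul x ξ =>
        rw [hipTt, hrepr x j, hc, inner_smul_right]
    | add u v hu hv =>
        rw [hipT₁, hu, hv, map_add, inner_add_right]
  -- Part 1
  have hstar : ∀ ξ, φLstar ξ = ∑ i, (b i) ⊗ₜ[ℂ] (lH (star (b i)) ξ) := by
    intro ξ
    have hcj : ∀ j, c j (φLstar ξ) = lH (star (b j)) ξ := by
      intro j
      refine ext_inner_left ℂ fun η => ?_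
      rw [← hip, hadj, hφL, hlstar]
    conv_lhs => rw [← hrecon (φLstar ξ)]
    exact Finset.sum_congr rfl fun i _ => by rw [hcj i]
  refine ⟨hstar, ?_⟩
  -- the completeness relation ∑ bᵢ bᵢ* = 1
  have hσinv : σ⁻¹ * σ = 1 :=
    Matrix.nonsing_inv_mul σ ((Matrix.isUnit_iff_isUnit_det σ).mp hσ.isUnit)
  have hstarb : ∀ (q p : Fin d),
      ∑ i, (star (b i)) p q • b i
        = (d : ℂ)⁻¹ • (Matrix.single q p 1 * σ⁻¹) := by
    intro q p
    set A : Matrix (Fin d) (Fin d) ℂ :=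
      (d : ℂ)⁻¹ • (Matrix.single q p 1 * σ⁻¹) with hA
    have hcoeff : ∀ i, B.repr A i = (star (b i)) p q := by
      intro i
      rw [← hrepr A i, hA]
      have : star (b i) * ((d : ℂ)⁻¹ • (Matrix.single q p 1 * σ⁻¹)) * σ
          = (d : ℂ)⁻¹ • (star (b i) * Matrix.single q p 1 * (σ⁻¹ * σ)) := by
        rw [Matrix.mul_smul, Matrix.smul_mul]
        ring_nf
        rw [Matrix.mul_assoc, Matrix.mul_assoc, Matrix.mul_assoc]
      rw [this, hσinv, Matrix.mul_one, Matrix.trace_smul, smul_eq_mul, ← mul_assoc,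
        mul_inv_cancel₀ hd', one_mul]
      -- trace (star (b i) * stdBasisMatrix q p 1) = (star (b i)) p q
      rw [Matrix.trace_mul_comm]
      simp [Matrix.trace, Matrix.mul_apply, Matrix.single, Matrix.diag,
        ite_and, Finset.sum_ite_eq, Matrix.conjTranspose_apply]
    have := hsumrepr A
    simp only [hcoeff] at this
    rw [this, hA]
  have hone : ∑ i, b i * star (b i) = 1 := by
    ext r t
    have h1 : (∑ i, b i * star (b i)) r t = ∑ s, ∑ i, (star (b i)) s t * (b i) r s := by
      rw [Matrix.sum_apply]
      simp only [Matrix.mul_apply]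
      rw [Finset.sum_comm]
      exact Finset.sum_congr rfl fun s _ => Finset.sum_congr rfl fun i _ => mul_comm _ _
    have h2 : ∀ s : Fin d, ∑ i, (star (b i)) s t * (b i) r s
        = (d : ℂ)⁻¹ * ((Matrix.single t s 1 * σ⁻¹ : Matrix (Fin d) (Fin d) ℂ) r s) := by
      intro s
      have h := congrArg (fun m : Matrix (Fin d) (Fin d) ℂ => m r s) (hstarb t s)
      simpa [Matrix.sum_apply, Matrix.smul_apply, smul_eq_mul] using h
    have h3 : ∑ s, (Matrix.single t s 1 * σ⁻¹ : Matrix (Fin d) (Fin d) ℂ) r s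
        = if r = t then (σ⁻¹).trace else 0 := by
      simp [Matrix.mul_apply, Matrix.single, ite_and, Finset.sum_ite_eq,
        Matrix.trace, Matrix.diag, eq_comm]
    rw [h1]
    simp only [h2]
    rw [← Finset.mul_sum, h3]
    by_cases h : r = t
    · subst h
      simp [htr, Matrix.one_apply_eq, inv_mul_cancel₀ hd']
    · simp [h, Matrix.one_apply_ne h]
  -- Part 2
  intro ξ
  rw [hstar ξ, map_sum]
  simp only [hφL]
  have hmul : ∀ i, lH (b i) (lH (star (b i)) ξ) = lH (b i * star (b i)) ξ := by
    intro i
    rw [map_mul]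
    rfl
  calc ∑ i, lH (b i) (lH (star (b i)) ξ)
      = ∑ i, lH (b i * star (b i)) ξ := Finset.sum_congr rfl fun i _ => hmul i
    _ = lH (∑ i, b i * star (b i)) ξ := by
        rw [map_sum]
        exact (LinearMap.sum_apply _ _ _).symm
    _ = ξ := by rw [hone, map_one]; exact Module.End.one_apply ξ
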